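/- Let {X_i}_{i≥1} be a sequence of independent, identically distributed random vectors in ℝ^d with common distribution P, let P_n denote the empirical probability measure of X_1, …, X_n, let α ∈ (0, 1] and let Q ∈ P^α. Then almost surely there exists a sequence of probability measures {Q_n}_n with Q_n ∈ P_n^α for all sufficiently large n such that Q_n converges weakly to Q; that is, Q belongs to the Painlevé–Kuratowski lower limit liminf_n P_n^α almost surely. -/

import Mathlib

open MeasureTheory ProbabilityTheory Filter Topology
open scoped ENNReal NNReal

noncomputable section AuxEmp

variable {E : Type*} [MeasurableSpace E] [MeasurableSingletonClass E]

def empS (f : E → ℝ) (x : ℕ → E) (n : ℕ) : ℝ := (∑ i ∈ Finset.range n, f (x i)) / n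

def empM (f : E → ℝ) (x : ℕ → E) (n : ℕ) : ℝ := max 1 (empS f x n)

def empC (f : E → ℝ) (x : ℕ → E) (n : ℕ) : ℝ := 1 - empS f x n / empM f x n

def empV (f : E → ℝ) (x : ℕ → E) (α : ℝ) (n i : ℕ) : ℝ :=
  f (x i) / empM f x n +
    (if α⁻¹ - 1 + empC f x n = 0 then 0
     else empC f x n * (α⁻¹ - f (x i) / empM f x n) / (α⁻¹ - 1 + empC f x n))

def empQ (f : E → ℝ) (x : ℕ → E) (α : ℝ) (n : ℕ) : Measure E :=
  (n : ℝ≥0∞)⁻¹ • ∑ i ∈ Finset.range n, (ENNReal.ofReal (empV f x α n i)) • Measure.dirac (x i)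

variable {f : E → ℝ} {x : ℕ → E} {α : ℝ} {n i : ℕ}

lemma one_le_empM : 1 ≤ empM f x n := le_max_left _ _

lemma empM_pos : 0 < empM f x n := lt_of_lt_of_le one_pos one_le_empM

lemma empS_nonneg (hf0 : ∀ y, 0 ≤ f y) : 0 ≤ empS f x n :=
  div_nonneg (Finset.sum_nonneg fun i _ => hf0 _) (Nat.cast_nonneg n)

lemma empC_nonneg (hf0 : ∀ y, 0 ≤ f y) : 0 ≤ empC f x n := by
  have h1 : empS f x n / empM f x n ≤ 1 :=
    (div_le_one empM_pos).2 (le_max_right _ _)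
  simpa [empC] using h1

lemma empC_le_one (hf0 : ∀ y, 0 ≤ f y) : empC f x n ≤ 1 := by
  have : 0 ≤ empS f x n / empM f x n := div_nonneg (empS_nonneg hf0) empM_pos.le
  simp [empC]; linarith

lemma empC_le_D (hα : 1 ≤ α⁻¹) : empC f x n ≤ α⁻¹ - 1 + empC f x n := by linarith

lemma w_nonneg (hf0 : ∀ y, 0 ≤ f y) : 0 ≤ f (x i) / empM f x n :=
  div_nonneg (hf0 _) empM_pos.le

lemma w_le (hf1 : ∀ y, f y ≤ α⁻¹) (hα : 1 ≤ α⁻¹) : f (x i) / empM f x n ≤ α⁻¹ := by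
  have h := empM_pos (f := f) (x := x) (n := n)
  rw [div_le_iff₀ h]
  calc f (x i) ≤ α⁻¹ := hf1 _
  _ ≤ α⁻¹ * empM f x n := by nlinarith [one_le_empM (f := f) (x := x) (n := n)]

lemma le_empV (hf0 : ∀ y, 0 ≤ f y) (hf1 : ∀ y, f y ≤ α⁻¹) (hα : 1 ≤ α⁻¹) :
    f (x i) / empM f x n ≤ empV f x α n i := by
  unfold empV
  split_ifs with h
  · simp
  · have hD : 0 < α⁻¹ - 1 + empC f x n :=
      lt_of_le_of_ne (le_trans (empC_nonneg hf0) (empC_le_D hα)) (Ne.symm h)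
    have : 0 ≤ empC f x n * (α⁻¹ - f (x i) / empM f x n) / (α⁻¹ - 1 + empC f x n) :=
      div_nonneg (mul_nonneg (empC_nonneg hf0) (by linarith [w_le (f := f) (x := x) (n := n) (i := i) hf1 hα])) hD.le
    linarith

lemma empV_nonneg (hf0 : ∀ y, 0 ≤ f y) (hf1 : ∀ y, f y ≤ α⁻¹) (hα : 1 ≤ α⁻¹) :
    0 ≤ empV f x α n i :=
  le_trans (w_nonneg hf0) (le_empV hf0 hf1 hα)

lemma empV_le (hf0 : ∀ y, 0 ≤ f y) (hf1 : ∀ y, f y ≤ α⁻¹) (hα : 1 ≤ α⁻¹) :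
    empV f x α n i ≤ α⁻¹ := by
  have hw0 := w_nonneg (f := f) (x := x) (n := n) (i := i) hf0
  have hw1 := w_le (f := f) (x := x) (n := n) (i := i) hf1 hα
  unfold empV
  split_ifs with h
  · simpa using hw1
  · have hD : 0 < α⁻¹ - 1 + empC f x n :=
      lt_of_le_of_ne (le_trans (empC_nonneg hf0) (empC_le_D hα)) (Ne.symm h)
    have hcD : empC f x n / (α⁻¹ - 1 + empC f x n) ≤ 1 :=
      (div_le_one hD).2 (empC_le_D hα)
    have h2 : empC f x n * (α⁻¹ - f (x i) / empM f x n) / (α⁻¹ - 1 + empC f x n)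
        ≤ α⁻¹ - f (x i) / empM f x n := by
      rw [div_le_iff₀ hD]
      nlinarith [empC_nonneg (f := f) (x := x) (n := n) hf0]
    linarith

lemma sum_empV (hf0 : ∀ y, 0 ≤ f y) (hα : 1 ≤ α⁻¹) (hn : 1 ≤ n) :
    ∑ i ∈ Finset.range n, empV f x α n i = n := by
  have hnpos : (0 : ℝ) < n := by exact_mod_cast hn
  have hm := empM_pos (f := f) (x := x) (n := n)
  have hsumf : ∑ i ∈ Finset.range n, f (x i) = n * empS f x n := by
    unfold empS; field_simp
  have hsw : ∑ i ∈ Finset.range n, f (x i) / empM f x n = n * (1 - empC f x n) := by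
    rw [← Finset.sum_div, hsumf]
    unfold empC
    field_simp
    ring
  unfold empV
  rw [Finset.sum_add_distrib, hsw]
  split_ifs with h
  · have hc0 : empC f x n = 0 := le_antisymm (by linarith [empC_le_D (f := f) (x := x) (n := n) hα]) (empC_nonneg hf0)
    simp [hc0]
  · have hsum2 : ∑ i ∈ Finset.range n,
        empC f x n * (α⁻¹ - f (x i) / empM f x n) / (α⁻¹ - 1 + empC f x n)
        = empC f x n * (n * α⁻¹ - n * (1 - empC f x n)) / (α⁻¹ - 1 + empC f x n) := by
      rw [← Finset.sum_div, ← Finset.mul_sum]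
      congr 2
      rw [Finset.sum_sub_distrib, hsw, Finset.sum_const, Finset.card_range]
      ring_nf
    rw [hsum2]
    have : n * α⁻¹ - n * (1 - empC f x n) = n * (α⁻¹ - 1 + empC f x n) := by ring
    rw [this, show empC f x n * (↑n * (α⁻¹ - 1 + empC f x n)) / (α⁻¹ - 1 + empC f x n)
      = ↑n * empC f x n from by rw [div_eq_iff h]; ring]
    ring


lemma empQ_apply (hf0 : ∀ y, 0 ≤ f y) (hf1 : ∀ y, f y ≤ α⁻¹) (hα : 1 ≤ α⁻¹) (hn : 1 ≤ n)
    (B : Set E) :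
    empQ f x α n B
      = ENNReal.ofReal ((∑ i ∈ Finset.range n,
          B.indicator (fun _ => empV f x α n i) (x i)) / n) := by
  have hnpos : (0:ℝ) < n := by exact_mod_cast hn
  have h1 : empQ f x α n B
      = (n : ℝ≥0∞)⁻¹ * ∑ i ∈ Finset.range n,
          ENNReal.ofReal (empV f x α n i) * Measure.dirac (x i) B := by
    simp [empQ, Measure.smul_apply, Measure.finset_sum_apply, smul_eq_mul]
  have h2 : ∀ i, ENNReal.ofReal (empV f x α n i) * Measure.dirac (x i) B
      = ENNReal.ofReal (B.indicator (fun _ => empV f x α n i) (x i)) := by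
    intro i
    rw [Measure.dirac_apply]
    by_cases hx : x i ∈ B <;>
      simp [Set.indicator_of_mem, Set.indicator_of_notMem, hx]
  rw [h1]
  simp only [h2]
  rw [← ENNReal.ofReal_sum_of_nonneg
    (fun i _ => Set.indicator_nonneg (fun _ _ => empV_nonneg hf0 hf1 hα) _)]
  rw [ENNReal.ofReal_div_of_pos hnpos, ENNReal.ofReal_natCast, div_eq_mul_inv, mul_comm]

lemma isProbabilityMeasure_empQ (hf0 : ∀ y, 0 ≤ f y) (hf1 : ∀ y, f y ≤ α⁻¹) (hα : 1 ≤ α⁻¹)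
    (hn : 1 ≤ n) : IsProbabilityMeasure (empQ f x α n) := by
  constructor
  rw [empQ_apply hf0 hf1 hα hn]
  have : ∑ i ∈ Finset.range n,
      (Set.univ : Set E).indicator (fun _ => empV f x α n i) (x i)
      = ∑ i ∈ Finset.range n, empV f x α n i := by
    apply Finset.sum_congr rfl; intro i _; simp
  rw [this, sum_empV hf0 hα hn]
  have hnpos : (0:ℝ) < n := by exact_mod_cast hn
  rw [div_self hnpos.ne', ENNReal.ofReal_one]

lemma empQ_le (hf0 : ∀ y, 0 ≤ f y) (hf1 : ∀ y, f y ≤ α⁻¹) (hα : 1 ≤ α⁻¹) (hn : 1 ≤ n)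
    (B : Set E) :
    empQ f x α n B ≤ ENNReal.ofReal α⁻¹
      * ENNReal.ofReal ((∑ i ∈ Finset.range n,
          B.indicator (fun _ => (1:ℝ)) (x i)) / n) := by
  have hnpos : (0:ℝ) < n := by exact_mod_cast hn
  rw [empQ_apply hf0 hf1 hα hn, ← ENNReal.ofReal_mul (by positivity)]
  apply ENNReal.ofReal_le_ofReal
  rw [← mul_div_assoc, Finset.mul_sum]
  gcongr with i hi
  by_cases hx : x i ∈ B <;> simp [hx, empV_le (i := i) hf0 hf1 hα]

lemma empQ_ge (hf0 : ∀ y, 0 ≤ f y) (hf1 : ∀ y, f y ≤ α⁻¹) (hα : 1 ≤ α⁻¹) (hn : 1 ≤ n)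
    (B : Set E) :
    ENNReal.ofReal (((∑ i ∈ Finset.range n, B.indicator f (x i)) / n) / empM f x n)
      ≤ empQ f x α n B := by
  rw [empQ_apply hf0 hf1 hα hn]
  apply ENNReal.ofReal_le_ofReal
  rw [div_right_comm, Finset.sum_div]
  gcongr with i hi
  by_cases hx : x i ∈ B
  · simpa [hx] using le_empV (i := i) hf0 hf1 hα
  · simp [hx]

end AuxEmp

lemma slln_aux {E : Type*} [MeasurableSpace E] {Ω : Type*} [MeasurableSpace Ω]
    (μ : Measure Ω) [IsProbabilityMeasure μ] (P : Measure E)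
    (X : ℕ → Ω → E) (hmeas : ∀ i, Measurable (X i))
    (hindep : iIndepFun X μ)
    (hdist : ∀ i, μ.map (X i) = P)
    (h : E → ℝ) (hh : Measurable h) (C : ℝ) (hC : ∀ y, ‖h y‖ ≤ C) :
    ∀ᵐ ω ∂μ, Tendsto (fun n : ℕ => (∑ i ∈ Finset.range n, h (X i ω)) / n) atTop
      (𝓝 (∫ y, h y ∂P)) := by
  have hint : Integrable (fun ω => h (X 0 ω)) μ :=
    (integrable_const C).mono' ((hh.comp (hmeas 0)).aestronglyMeasurable)
      (ae_of_all _ fun ω => hC _)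
  have hindep' : Pairwise (Function.onFun (IndepFun · · μ) fun i ω => h (X i ω)) :=
    fun i j hij => (hindep.indepFun hij).comp hh hh
  have hident : ∀ i, IdentDistrib (fun ω => h (X i ω)) (fun ω => h (X 0 ω)) μ μ :=
    fun i => IdentDistrib.comp
      ⟨(hmeas i).aemeasurable, (hmeas 0).aemeasurable, by rw [hdist i, hdist 0]⟩ hh
  have hE : ∫ ω, h (X 0 ω) ∂μ = ∫ y, h y ∂P := by
    rw [← hdist 0, integral_map (hmeas 0).aemeasurable hh.aestronglyMeasurable]
  have := strong_law_ae_real _ hint hindep' hident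
  rwa [hE] at this

lemma density_aux {E : Type*} [MeasurableSpace E] (P Q : Measure E)
    [IsProbabilityMeasure P] [IsProbabilityMeasure Q] {c : ℝ} (hc : 0 < c)
    (hQ : ∀ B, MeasurableSet B → Q B ≤ ENNReal.ofReal c * P B) :
    ∃ f : E → ℝ, Measurable f ∧ (∀ y, 0 ≤ f y) ∧ (∀ y, f y ≤ c) ∧
      (∀ B, MeasurableSet B → ∫ y in B, f y ∂P = (Q B).toReal) := by
  have hac : Q ≪ P := by
    refine Measure.AbsolutelyContinuous.mk fun B hB hB0 => ?_
    have := hQ B hB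
    rw [hB0, mul_zero] at this
    exact le_antisymm this zero_le
  set g := Q.rnDeriv P with hg
  have hg_meas : Measurable g := Measure.measurable_rnDeriv _ _
  have hg_le : g ≤ᵐ[P] fun _ => ENNReal.ofReal c := by
    apply ae_le_of_forall_setLIntegral_le_of_sigmaFinite hg_meas
    intro s hs _
    rw [Measure.setLIntegral_rnDeriv hac, setLIntegral_const]
    exact hQ s hs
  have hg_top : ∀ᵐ y ∂P, g y < ⊤ := Measure.rnDeriv_lt_top Q P
  refine ⟨fun y => min (g y).toReal c, (hg_meas.ennreal_toReal).min measurable_const,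
    fun y => le_min ENNReal.toReal_nonneg hc.le, fun y => min_le_right _ _, ?_⟩
  have hae : (fun y => ENNReal.ofReal (min (g y).toReal c)) =ᵐ[P] g := by
    filter_upwards [hg_le, hg_top] with y h1 h2
    rw [min_eq_left (ENNReal.toReal_le_of_le_ofReal hc.le h1), ENNReal.ofReal_toReal h2.ne]
  have key : ∀ B : Set E, MeasurableSet B →
      ∫⁻ y in B, ENNReal.ofReal (min (g y).toReal c) ∂P = Q B := by
    intro B hB
    rw [lintegral_congr_ae (ae_restrict_of_ae hae), Measure.setLIntegral_rnDeriv hac]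
  intro B hB
  rw [integral_eq_lintegral_of_nonneg_ae
    (ae_of_all _ fun y => le_min ENNReal.toReal_nonneg hc.le)
    (((hg_meas.ennreal_toReal).min measurable_const).aestronglyMeasurable.restrict),
    key B hB]


/-- The `α`-trimming of a Borel probability measure `P` on `ℝ^d`: the set of Borel probability
measures `Q` with `Q B ≤ α⁻¹ * P B` for every Borel set `B`. -/
def trimSet {d : ℕ} (P : ProbabilityMeasure (Fin d → ℝ)) (α : ℝ) :
    Set (ProbabilityMeasure (Fin d → ℝ)) :=
  {Q | ∀ B : Set (Fin d → ℝ), MeasurableSet B →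
    (Q : Measure (Fin d → ℝ)) B ≤ ENNReal.ofReal α⁻¹ * (P : Measure (Fin d → ℝ)) B}

/-- Let `X₁, X₂, …` be i.i.d. random vectors in `ℝ^d` with common distribution `P`, let `Pₙ`
be the empirical measure of `X₁, …, Xₙ`, let `α ∈ (0,1]` and let `Q ∈ P^α`. Then almost surely
there is a sequence of probability measures `{Qₙ}` with `Qₙ ∈ Pₙ^α` for all sufficiently
large `n`, converging weakly to `Q`; that is, `Q` belongs a.s. to the Painlevé–Kuratowski lower
limit of the sets `Pₙ^α`. Here `X i` denotes `X_{i+1}` and the empirical measures are described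
by the hypothesis `hPn`. -/
theorem mem_liminf_trimmed_empirical {d : ℕ} {Ω : Type*} [MeasurableSpace Ω]
    (μ : Measure Ω) [IsProbabilityMeasure μ]
    (P : ProbabilityMeasure (Fin d → ℝ))
    (X : ℕ → Ω → (Fin d → ℝ))
    (hmeas : ∀ i, Measurable (X i))
    (hindep : iIndepFun X μ)
    (hdist : ∀ i, μ.map (X i) = (P : Measure (Fin d → ℝ)))
    (Pn : Ω → ℕ → ProbabilityMeasure (Fin d → ℝ))
    (hPn : ∀ ω : Ω, ∀ n : ℕ, 1 ≤ n → ∀ B : Set (Fin d → ℝ), MeasurableSet B →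
      ((Pn ω n : Measure (Fin d → ℝ)) B).toReal
        = (∑ i ∈ Finset.range n, Set.indicator B (fun _ => (1 : ℝ)) (X i ω)) / n)
    (α : ℝ) (hα : α ∈ Set.Ioc (0 : ℝ) 1)
    (Q : ProbabilityMeasure (Fin d → ℝ)) (hQ : Q ∈ trimSet P α) :
    ∀ᵐ ω ∂μ, ∃ (N : ℕ) (Qn : ℕ → ProbabilityMeasure (Fin d → ℝ)),
      (∀ n, N ≤ n → Qn n ∈ trimSet (Pn ω n) α) ∧
      Tendsto Qn atTop (nhds Q) := by
  classical
  obtain ⟨hα0, hα1⟩ := hα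
  have hαinv : 1 ≤ α⁻¹ := by
    rw [← inv_one]
    exact inv_anti₀ hα0 hα1
  have hc : (0:ℝ) < α⁻¹ := by positivity
  obtain ⟨f, hf_meas, hf0, hf1, hfint⟩ :=
    density_aux (P : Measure (Fin d → ℝ)) (Q : Measure (Fin d → ℝ)) hc (fun B hB => hQ B hB)
  -- countable basis
  obtain ⟨Bs, hBs_count, -, hBs_basis⟩ :=
    TopologicalSpace.exists_countable_basis (Fin d → ℝ)
  obtain ⟨b, hb⟩ :=
    Set.Countable.exists_eq_range (hBs_count.insert ∅) ⟨∅, Set.mem_insert _ _⟩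
  have hb_open : ∀ i, IsOpen (b i) := by
    intro i
    have : b i ∈ insert ∅ Bs := hb ▸ Set.mem_range_self i
    rcases Set.mem_insert_iff.1 this with h | h
    · rw [h]; exact isOpen_empty
    · exact hBs_basis.isOpen h
  set Uset : Finset ℕ → Set (Fin d → ℝ) := fun t => ⋃ i ∈ t, b i with hUset
  have hU_open : ∀ t, IsOpen (Uset t) := fun t => isOpen_biUnion fun i _ => hb_open i
  have hU_meas : ∀ t, MeasurableSet (Uset t) := fun t => (hU_open t).measurableSet
  -- ∫ f dP = 1
  have hint1 : ∫ y, f y ∂(P : Measure (Fin d → ℝ)) = 1 := by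
    have h := hfint Set.univ MeasurableSet.univ
    rwa [setIntegral_univ, measure_univ, ENNReal.toReal_one] at h
  have hintU : ∀ t, ∫ y, (Uset t).indicator f y ∂(P : Measure (Fin d → ℝ))
      = ((Q : Measure (Fin d → ℝ)) (Uset t)).toReal := by
    intro t
    rw [integral_indicator (hU_meas t)]
    exact hfint _ (hU_meas t)
  -- SLLN events
  have hfnorm : ∀ y, ‖f y‖ ≤ α⁻¹ := fun y => by
    rw [Real.norm_eq_abs, abs_of_nonneg (hf0 y)]; exact hf1 y
  have ev1 := slln_aux μ (P : Measure (Fin d → ℝ)) X hmeas hindep hdist f hf_meas α⁻¹ hfnorm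
  have ev2 : ∀ᵐ ω ∂μ, ∀ t : Finset ℕ,
      Tendsto (fun n : ℕ => (∑ i ∈ Finset.range n, (Uset t).indicator f (X i ω)) / n) atTop
        (𝓝 (∫ y, (Uset t).indicator f y ∂(P : Measure (Fin d → ℝ)))) := by
    rw [ae_all_iff]
    intro t
    refine slln_aux μ (P : Measure (Fin d → ℝ)) X hmeas hindep hdist _
      (hf_meas.indicator (hU_meas t)) α⁻¹ ?_
    intro y
    by_cases hy : y ∈ Uset t
    · simpa [Set.indicator_of_mem hy] using hfnorm y
    · simp [Set.indicator_of_notMem hy, hc.le]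
  filter_upwards [ev1, ev2] with ω hω1 hω2
  set x : ℕ → (Fin d → ℝ) := fun i => X i ω with hx
  rw [hint1] at hω1
  have hS : Tendsto (fun n => empS f x n) atTop (𝓝 1) := hω1
  have hM : Tendsto (fun n => empM f x n) atTop (𝓝 1) := by
    have h := (tendsto_const_nhds (x := (1:ℝ)) (f := atTop)).max hS
    rwa [max_self] at h
  have hPM : ∀ n, 1 ≤ n → IsProbabilityMeasure (empQ f x α n) :=
    fun n hn => isProbabilityMeasure_empQ hf0 hf1 hαinv hn
  have hcoe : ∀ (ν : ProbabilityMeasure (Fin d → ℝ)) (s : Set (Fin d → ℝ)),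
      ((ν s : ℝ≥0) : ℝ) = ((ν : Measure (Fin d → ℝ)) s).toReal := by
    intro ν s
    rw [← ProbabilityMeasure.ennreal_coeFn_eq_coeFn_toMeasure, ENNReal.coe_toReal]
  set Qn' : ℕ → ProbabilityMeasure (Fin d → ℝ) :=
    fun n => if h : 1 ≤ n then ⟨empQ f x α n, hPM n h⟩ else Q with hQn'
  have hQn'val : ∀ n, ∀ h : 1 ≤ n, (Qn' n : Measure (Fin d → ℝ)) = empQ f x α n := by
    intro n h
    rw [hQn']
    dsimp only
    exact (congrArg (fun ν : ProbabilityMeasure (Fin d → ℝ) => (ν : Measure (Fin d → ℝ))) (dif_pos h)).trans rfl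
  refine ⟨1, Qn', ?_, ?_⟩
  · -- trimming membership
    intro n hn B hB
    have hPnB : ((Pn ω n : Measure (Fin d → ℝ))) B
        = ENNReal.ofReal ((∑ i ∈ Finset.range n,
            Set.indicator B (fun _ => (1:ℝ)) (X i ω)) / n) := by
      rw [← hPn ω n hn B hB, ENNReal.ofReal_toReal (measure_ne_top _ _)]
    rw [hQn'val n hn, hPnB]
    exact empQ_le hf0 hf1 hαinv hn B
  · -- weak convergence
    apply MeasureTheory.tendsto_of_forall_isOpen_le_liminf
    intro G hG
    have key : ∀ ε : ℝ, 0 < ε → ∀ᶠ n in atTop,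
        ((Q : Measure (Fin d → ℝ)) G).toReal - ε ≤ ((Qn' n G : ℝ≥0) : ℝ) := by
      intro ε hε
      set cset : ℕ → Set (Fin d → ℝ) := fun i => if b i ⊆ G then b i else ∅ with hcset
      have hcG : ⋃ i, cset i = G := by
        apply subset_antisymm
        · apply Set.iUnion_subset
          intro i
          by_cases h : b i ⊆ G <;> simp [hcset, h]
        · intro y hy
          obtain ⟨s, hsB, hys, hsG⟩ := hBs_basis.exists_subset_of_mem_open hy hG
          have : s ∈ Set.range b := by rw [← hb]; exact Set.mem_insert_of_mem _ hsB
          obtain ⟨i, rfl⟩ := this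
          exact Set.mem_iUnion.2 ⟨i, by simp [hcset, hsG, hys]⟩
      have hQacc : Tendsto (fun k => ((Q : Measure (Fin d → ℝ)) (Set.accumulate cset k)).toReal)
          atTop (𝓝 (((Q : Measure (Fin d → ℝ)) G).toReal)) := by
        have h1 := tendsto_measure_iUnion_accumulate (μ := (Q : Measure (Fin d → ℝ))) (f := cset)
        rw [hcG] at h1
        exact (ENNReal.tendsto_toReal (measure_ne_top _ _)).comp h1
      obtain ⟨k, hk⟩ := (hQacc.eventually (eventually_gt_nhds
        (show ((Q : Measure (Fin d → ℝ)) G).toReal - ε/2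
          < ((Q : Measure (Fin d → ℝ)) G).toReal by linarith))).exists
      set t : Finset ℕ := (Finset.range (k+1)).filter (fun i => b i ⊆ G) with ht
      have hUt : Uset t = Set.accumulate cset k := by
        ext y
        constructor
        · intro hy
          rw [hUset, Set.mem_iUnion₂] at hy
          obtain ⟨i, hi, hyi⟩ := hy
          rw [ht, Finset.mem_filter, Finset.mem_range, Nat.lt_succ_iff] at hi
          rw [Set.mem_accumulate]
          refine ⟨i, hi.1, ?_⟩
          simp only [hcset]
          rw [if_pos hi.2]
          exact hyi
        · intro hy
          rw [Set.mem_accumulate] at hy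
          obtain ⟨i, hik, hyi⟩ := hy
          simp only [hcset] at hyi
          by_cases h : b i ⊆ G
          · rw [if_pos h] at hyi
            exact Set.mem_biUnion
              (Finset.mem_filter.2 ⟨Finset.mem_range.2 (Nat.lt_succ_of_le hik), h⟩) hyi
          · rw [if_neg h] at hyi
            exact absurd hyi (Set.notMem_empty y)
      have hUtG : Uset t ⊆ G := by
        rw [hUt, ← hcG]
        intro y hy
        rw [Set.mem_accumulate] at hy
        obtain ⟨i, _, hyi⟩ := hy
        exact Set.mem_iUnion.2 ⟨i, hyi⟩
      have ℓ := hω2 t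
      rw [hintU t] at ℓ
      have hlim : Tendsto (fun n : ℕ =>
          ((∑ i ∈ Finset.range n, (Uset t).indicator f (x i)) / n) / empM f x n) atTop
          (𝓝 (((Q : Measure (Fin d → ℝ)) (Uset t)).toReal / 1)) := ℓ.div hM one_ne_zero
      rw [div_one] at hlim
      have hQU : ((Q : Measure (Fin d → ℝ)) G).toReal - ε
          < ((Q : Measure (Fin d → ℝ)) (Uset t)).toReal := by
        rw [hUt]; linarith [hk]
      filter_upwards [hlim.eventually (eventually_gt_nhds hQU), eventually_ge_atTop 1]
        with n hyn hn1
      haveI := hPM n hn1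
      have h2 : ENNReal.ofReal
          (((∑ i ∈ Finset.range n, (Uset t).indicator f (x i)) / n) / empM f x n)
          ≤ empQ f x α n G :=
        le_trans (empQ_ge hf0 hf1 hαinv hn1 (Uset t)) (measure_mono hUtG)
      have h3 := ENNReal.toReal_mono (measure_ne_top (empQ f x α n) G) h2
      have hy0 : 0 ≤ ((∑ i ∈ Finset.range n, (Uset t).indicator f (x i)) / n) / empM f x n :=
        div_nonneg (div_nonneg (Finset.sum_nonneg fun i _ =>
          Set.indicator_nonneg (fun y _ => hf0 y) _) (Nat.cast_nonneg n)) empM_pos.le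
      rw [ENNReal.toReal_ofReal hy0] at h3
      have hun : ((Qn' n G : ℝ≥0) : ℝ) = (empQ f x α n G).toReal := by
        rw [hcoe, hQn'val n hn1]
      rw [hun]
      linarith
    -- conclude in ℝ≥0
    apply le_of_forall_pos_le_add
    intro ε hε
    have hcb : IsCoboundedUnder (· ≥ ·) atTop (fun n => Qn' n G) :=
      (Filter.isBoundedUnder_of ⟨1, fun n => ProbabilityMeasure.apply_le_one _ _⟩).isCoboundedUnder_ge
    have hl : Q G - ε ≤ liminf (fun n => Qn' n G) atTop := by
      apply le_liminf_of_le hcb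
      filter_upwards [key ε (by exact_mod_cast hε)] with n hn
      rw [tsub_le_iff_right, ← NNReal.coe_le_coe]
      push_cast
      rw [hcoe Q G]
      linarith
    exact tsub_le_iff_right.mp hl
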